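/- Let ξ : ℝ³ → ℝ be twice continuously differentiable and let 0 < c ≤ M satisfy c|ζ|² ≤ D²ξ(x)[ζ,ζ] ≤ M|ζ|² for all x, ζ ∈ ℝ³. If v ∈ ℝ³ is nonzero, t > 0, and ξ(x) = 0 = ξ(x − t v), then (c/2)|v|² t ≤ ∇ξ(x)·v ≤ (M/2)|v|² t. -/

import Mathlib

noncomputable section

open Real

/-- Euclidean 3-space. -/
abbrev E3 : Type := EuclideanSpace ℝ (Fin 3)

/-- 1-D key lemma: if `g' = G`, `G' = H`, `a ≤ H` everywhere, `g 0 = g t = 0`,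
`0 < t`, then `G 0 ≤ -(a*t)/2`. -/
lemma key_one_dim (g G H : ℝ → ℝ) (a t : ℝ) (ht : 0 < t)
    (hg : ∀ s, HasDerivAt g (G s) s) (hG : ∀ s, HasDerivAt G (H s) s)
    (ha : ∀ s, a ≤ H s) (h0 : g 0 = 0) (htv : g t = 0) :
    G 0 ≤ -(a * t) / 2 := by
  -- G s - a*s is monotone
  have hm : Monotone (fun s => G s - a * s) := by
    apply monotone_of_deriv_nonneg
    · intro s
      exact ((hG s).sub ((hasDerivAt_id s).const_mul a)).differentiableAt
    · intro s
      rw [(show HasDerivAt (fun s => G s - a * s) (H s - a * 1) s from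
        (hG s).sub ((hasDerivAt_id s).const_mul a)).deriv]
      linarith [ha s]
  -- hence on Ici 0, G s ≥ G 0 + a*s
  have hGe : ∀ s ∈ Set.Ici (0:ℝ), G 0 + a * s ≤ G s := by
    intro s hs
    have := hm hs
    simp only [mul_zero, sub_zero] at this
    linarith
  -- the function g s - G 0 * s - a*s^2/2 is monotone on Ici 0
  have hm2 : MonotoneOn (fun s => g s - G 0 * s - a * s ^ 2 / 2) (Set.Ici 0) := by
    have hd : ∀ s : ℝ, HasDerivAt (fun s => g s - G 0 * s - a * s ^ 2 / 2)
        (G s - G 0 - a * s) s := by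
      intro s
      have h1 : HasDerivAt (fun s : ℝ => G 0 * s) (G 0) s := by
        simpa using (hasDerivAt_id s).const_mul (G 0)
      have h2 : HasDerivAt (fun s : ℝ => a * s ^ 2 / 2) (a * s) s := by
        have : HasDerivAt (fun s : ℝ => s ^ 2) (2 * s) s := by
          simpa using hasDerivAt_pow 2 s
        have := (this.const_mul a).div_const 2
        rwa [show a * (2 * s) / 2 = a * s by ring] at this
      exact ((hg s).sub h1).sub h2
    apply monotoneOn_of_deriv_nonneg (convex_Ici 0)
    · exact fun s _ => ((hd s).continuousAt).continuousWithinAt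
    · intro s _
      exact (hd s).differentiableAt.differentiableWithinAt
    · intro s hs
      rw [interior_Ici] at hs
      rw [(hd s).deriv]
      have := hGe s (Set.mem_Ici.2 (le_of_lt (Set.mem_Ioi.1 hs)))
      nlinarith [(Set.mem_Ioi.1 hs).le]
  have := hm2 (Set.self_mem_Ici) (Set.mem_Ici.2 ht.le) ht.le
  simp only [h0, htv, mul_zero, ne_eq, OfNat.ofNat_ne_zero, not_false_eq_true, zero_pow,
    mul_zero, zero_div, sub_zero, zero_sub] at this
  -- this : 0 ≤ 0 - G 0 * t - a * t^2/2  (roughly)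
  nlinarith [this]

/-- Two-sided backward exit-time estimates: if `x` and `x − t v` both lie on the
boundary `{ξ = 0}` of the uniformly convex domain, then the exit time `t` is
comparable to `∇ξ(x)·v / |v|²`. -/
theorem exit_time_two_sided_estimate
    (ξ : E3 → ℝ) (hξ : ContDiff ℝ 2 ξ)
    (c M : ℝ) (hc : 0 < c) (hcM : c ≤ M)
    (hconv : ∀ x ζ : E3, c * ‖ζ‖ ^ 2 ≤ iteratedFDeriv ℝ 2 ξ x ![ζ, ζ])
    (hconv' : ∀ x ζ : E3, iteratedFDeriv ℝ 2 ξ x ![ζ, ζ] ≤ M * ‖ζ‖ ^ 2)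
    (x v : E3) (hv : v ≠ 0) (t : ℝ) (ht : 0 < t)
    (hx : ξ x = 0) (hxb : ξ (x - t • v) = 0) :
    c / 2 * ‖v‖ ^ 2 * t ≤ fderiv ℝ ξ x v ∧ fderiv ℝ ξ x v ≤ M / 2 * ‖v‖ ^ 2 * t := by
  have hdiff : Differentiable ℝ ξ := hξ.differentiable two_ne_zero
  have hfd : ContDiff ℝ 1 (fderiv ℝ ξ) := hξ.fderiv_right (by norm_num)
  set γ : ℝ → EuclideanSpace ℝ (Fin 3) := fun s => x - s • v with hγdef
  have hγ : ∀ s : ℝ, HasDerivAt γ (-v) s := by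
    intro s
    have : HasDerivAt (fun s : ℝ => s • v) ((1:ℝ) • v) s := (hasDerivAt_id s).smul_const v
    simpa using this.const_sub x
  set G : ℝ → ℝ := fun s => -(fderiv ℝ ξ (γ s) v) with hGdef
  set H : ℝ → ℝ := fun s => iteratedFDeriv ℝ 2 ξ (γ s) ![v, v] with hHdef
  have hg : ∀ s, HasDerivAt (fun s => ξ (γ s)) (G s) s := by
    intro s
    have := (hdiff (γ s)).hasFDerivAt.comp_hasDerivAt s (hγ s)
    simp only [map_neg] at this
    exact this
  have hG : ∀ s, HasDerivAt G (H s) s := by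
    intro s
    have h1 : HasDerivAt (fun s => fderiv ℝ ξ (γ s)) (fderiv ℝ (fderiv ℝ ξ) (γ s) (-v)) s :=
      ((hfd.differentiable one_ne_zero) (γ s)).hasFDerivAt.comp_hasDerivAt s (hγ s)
    have h2 := ((ContinuousLinearMap.apply ℝ ℝ v).hasFDerivAt).comp_hasDerivAt s h1
    have h3 := h2.neg
    have hval : -((ContinuousLinearMap.apply ℝ ℝ v) (fderiv ℝ (fderiv ℝ ξ) (γ s) (-v))) = H s := by
      rw [hHdef]
      simp only [ContinuousLinearMap.apply_apply, map_neg, ContinuousLinearMap.neg_apply, neg_neg]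
      rw [iteratedFDeriv_two_apply]
      simp
    rw [hval] at h3
    exact h3
  have h0 : ξ (γ 0) = 0 := by simp [hγdef, hx]
  have htv : ξ (γ t) = 0 := by simpa [hγdef] using hxb
  -- lower bound: G 0 ≤ -(c‖v‖² t)/2
  have hlow : G 0 ≤ -(c * ‖v‖ ^ 2 * t) / 2 :=
    key_one_dim _ G H (c * ‖v‖ ^ 2) t ht hg hG (fun s => hconv (γ s) v) h0 htv
  have hup : -G 0 ≤ M * ‖v‖ ^ 2 * t / 2 := by
    have := key_one_dim (fun s => -(ξ (γ s))) (fun s => -(G s)) (fun s => -(H s))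
      (-(M * ‖v‖ ^ 2)) t ht (fun s => (hg s).neg) (fun s => (hG s).neg)
      (fun s => by simpa using hconv' (γ s) v) (by simp [h0]) (by simp [htv])
    simpa using this
  have hG0 : G 0 = -(fderiv ℝ ξ x v) := by simp [hGdef, hγdef]
  rw [hG0] at hlow hup
  constructor <;> nlinarith
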